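/- Let X ∈ M_m ⊗ M_n be positive semidefinite and let c ∈ R. Then cI − X is k-block positive if and only if c ≥ ‖X‖_{S(k)}. -/

import Mathlib

open scoped BigOperators
open Matrix

noncomputable section

/-- Elementary tensor of two vectors. -/
def tens {m n : ℕ} (a : Fin m → ℂ) (b : Fin n → ℂ) : Fin m × Fin n → ℂ :=
  fun p => a p.1 * b p.2

/-- Inner product `⟨w|v⟩`, conjugate-linear in the first argument. -/
def ip {ι : Type} [Fintype ι] (w v : ι → ℂ) : ℂ :=
  ∑ i, (starRingEnd ℂ) (w i) * v i

/-- Euclidean norm. -/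
def nrm {ι : Type} [Fintype ι] (v : ι → ℂ) : ℝ :=
  Real.sqrt (∑ i, Complex.normSq (v i))

/-- Schmidt rank at most `k`: `v` is a sum of `k` elementary tensors. -/
def SRle {m n : ℕ} (k : ℕ) (v : Fin m × Fin n → ℂ) : Prop :=
  ∃ (a : Fin k → Fin m → ℂ) (b : Fin k → Fin n → ℂ),
    v = fun p => ∑ l, a l p.1 * b l p.2

/-- The `s(k)`-vector norm. -/
def snorm {m n : ℕ} (k : ℕ) (v : Fin m × Fin n → ℂ) : ℝ :=
  sSup { r : ℝ | ∃ w : Fin m × Fin n → ℂ, nrm w = 1 ∧ SRle k w ∧ r = ‖ip w v‖ }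

/-- The `S(k)`-operator norm. -/
def Snorm {m n : ℕ} (k : ℕ) (X : Matrix (Fin m × Fin n) (Fin m × Fin n) ℂ) : ℝ :=
  sSup { r : ℝ | ∃ v w : Fin m × Fin n → ℂ, nrm v = 1 ∧ nrm w = 1 ∧ SRle k v ∧ SRle k w ∧
    r = ‖ip w (X.mulVec v)‖ }

/-- `k`-block positivity: `⟨v|X|v⟩ ≥ 0` for all unit vectors of Schmidt rank at most `k`. -/
def kBlockPos {m n : ℕ} (k : ℕ) (X : Matrix (Fin m × Fin n) (Fin m × Fin n) ℂ) : Prop :=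
  ∀ v : Fin m × Fin n → ℂ, nrm v = 1 → SRle k v → 0 ≤ (ip v (X.mulVec v)).re

lemma nrm_sq {ι : Type} [Fintype ι] (v : ι → ℂ) :
    (nrm v) ^ 2 = ∑ i, Complex.normSq (v i) := by
  rw [nrm, Real.sq_sqrt]
  exact Finset.sum_nonneg fun i _ => Complex.normSq_nonneg _

lemma nrm_nonneg {ι : Type} [Fintype ι] (v : ι → ℂ) : 0 ≤ nrm v :=
  Real.sqrt_nonneg _

lemma ip_self_eq {ι : Type} [Fintype ι] (v : ι → ℂ) :
    ip v v = ((nrm v) ^ 2 : ℝ) := by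
  rw [nrm_sq, ip]
  push_cast
  refine Finset.sum_congr rfl fun i _ => ?_
  rw [mul_comm, Complex.mul_conj]

lemma abs_ip_le {ι : Type} [Fintype ι] (a b : ι → ℂ) :
    ‖ip a b‖ ≤ nrm a * nrm b := by
  set a' : EuclideanSpace ℂ ι := (WithLp.equiv 2 (ι → ℂ)).symm a with ha'
  set b' : EuclideanSpace ℂ ι := (WithLp.equiv 2 (ι → ℂ)).symm b with hb'
  have h := norm_inner_le_norm (𝕜 := ℂ) a' b'
  have h1 : (inner ℂ a' b' : ℂ) = ip a b := by
    simp [PiLp.inner_apply, ip, RCLike.inner_apply, ha', hb', mul_comm]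
  have h2 : ‖a'‖ = nrm a := by
    rw [EuclideanSpace.norm_eq, nrm]
    congr 1
    refine Finset.sum_congr rfl fun i _ => ?_
    rw [← Complex.sq_norm]
    rfl
  have h3 : ‖b'‖ = nrm b := by
    rw [EuclideanSpace.norm_eq, nrm]
    congr 1
    refine Finset.sum_congr rfl fun i _ => ?_
    rw [← Complex.sq_norm]
    rfl
  rw [h1, h2, h3] at h
  exact h

lemma ip_BhB {ι : Type} [Fintype ι] [DecidableEq ι] (B : Matrix ι ι ℂ) (w v : ι → ℂ) :
    ip w ((Bᴴ * B).mulVec v) = ip (B.mulVec w) (B.mulVec v) := by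
  have h1 : ∀ (x y : ι → ℂ), ip x y = dotProduct (star x) y := by
    intro x y; rfl
  rw [h1, h1, ← Matrix.mulVec_mulVec, dotProduct_mulVec, ← Matrix.star_mulVec]

lemma abs_apply_le_one_of_nrm_one {ι : Type} [Fintype ι] {v : ι → ℂ} (hv : nrm v = 1)
    (i : ι) : ‖v i‖ ≤ 1 := by
  have h1 : Complex.normSq (v i) ≤ 1 := by
    have := Finset.single_le_sum (f := fun j => Complex.normSq (v j))
      (fun j _ => Complex.normSq_nonneg _) (Finset.mem_univ i)
    rw [← nrm_sq, hv] at this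
    simpa using this
  have h2 : ‖v i‖ = Real.sqrt (Complex.normSq (v i)) := by
    rw [Complex.norm_def]
  rw [h2]
  calc Real.sqrt (Complex.normSq (v i)) ≤ Real.sqrt 1 := Real.sqrt_le_sqrt h1
    _ = 1 := Real.sqrt_one


open scoped ComplexOrder
/-- Let `X ∈ M_m ⊗ M_n` be positive semidefinite and `c ∈ ℝ`.  Then
`c·I − X` is `k`-block positive if and only if `c ≥ ‖X‖_{S(k)}`. -/
theorem cI_sub_X_kBlockPos_iff (m n k : ℕ) (hm : 0 < m) (hn : 0 < n) (hk : 1 ≤ k)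
    (X : Matrix (Fin m × Fin n) (Fin m × Fin n) ℂ) (hX : X.PosSemidef) (c : ℝ) :
    kBlockPos k ((c : ℂ) • (1 : Matrix (Fin m × Fin n) (Fin m × Fin n) ℂ) - X) ↔
      Snorm k X ≤ c := by
  obtain ⟨B, hB⟩ : ∃ B : Matrix (Fin m × Fin n) (Fin m × Fin n) ℂ, X = Bᴴ * B := by
    open MatrixOrder in
    exact ⟨CFC.sqrt X, by
      rw [← Matrix.star_eq_conjTranspose, (CFC.sqrt_nonneg X).isSelfAdjoint.star_eq,
        CFC.sqrt_mul_sqrt_self X hX.nonneg]⟩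
  have hipX : ∀ w v : Fin m × Fin n → ℂ,
      ip w (X.mulVec v) = ip (B.mulVec w) (B.mulVec v) := by
    intro w v; rw [hB]; exact ip_BhB B w v
  have hdiag : ∀ v : Fin m × Fin n → ℂ,
      ip v (X.mulVec v) = ((nrm (B.mulVec v)) ^ 2 : ℝ) := by
    intro v; rw [hipX, ip_self_eq]
  have hrw : ∀ v : Fin m × Fin n → ℂ, nrm v = 1 →
      (ip v (((c : ℂ) • (1 : Matrix (Fin m × Fin n) (Fin m × Fin n) ℂ) - X).mulVec v)).re
        = c - (ip v (X.mulVec v)).re := by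
    intro v hv
    have h1 : ((c : ℂ) • (1 : Matrix (Fin m × Fin n) (Fin m × Fin n) ℂ) - X).mulVec v
        = (c : ℂ) • v - X.mulVec v := by
      rw [Matrix.sub_mulVec, Matrix.smul_mulVec, Matrix.one_mulVec]
    have h2 : ip v ((c : ℂ) • v - X.mulVec v) = (c : ℂ) * ip v v - ip v (X.mulVec v) := by
      simp [ip, mul_sub, Finset.sum_sub_distrib, Finset.mul_sum, Pi.smul_apply,
        smul_eq_mul, mul_left_comm]
    have h3 : ip v v = 1 := by rw [ip_self_eq, hv]; norm_num
    rw [h1, h2, h3, mul_one]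
    simp
  -- a unit vector of Schmidt rank ≤ k
  set i0 : Fin m := ⟨0, hm⟩
  set j0 : Fin n := ⟨0, hn⟩
  set l0 : Fin k := ⟨0, hk⟩
  set v0 : Fin m × Fin n → ℂ := fun p => if p = (i0, j0) then 1 else 0 with hv0def
  have hv0 : nrm v0 = 1 := by
    rw [nrm]
    have : ∑ i, Complex.normSq (v0 i) = 1 := by
      rw [hv0def]
      simp [apply_ite Complex.normSq, Finset.sum_ite_eq']
    rw [this, Real.sqrt_one]
  have hs0 : SRle k v0 := by
    refine ⟨fun l i => if l = l0 then (if i = i0 then 1 else 0) else 0,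
      fun l j => if j = j0 then 1 else 0, ?_⟩
    funext p
    rw [hv0def]
    have : ∑ l, (if l = l0 then (if p.1 = i0 then (1 : ℂ) else 0) else 0)
        * (if p.2 = j0 then 1 else 0)
        = (if p.1 = i0 then (1 : ℂ) else 0) * (if p.2 = j0 then 1 else 0) := by
      rw [← Finset.sum_mul]
      congr 1
      simp [Finset.sum_ite_eq']
    simp only [ite_mul, zero_mul] at this ⊢
    rw [this.symm]
    by_cases h1 : p.1 = i0 <;> by_cases h2 : p.2 = j0 <;>
      simp [Prod.ext_iff, h1, h2]
  constructor
  · intro h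
    have hre : ∀ v : Fin m × Fin n → ℂ, nrm v = 1 → SRle k v →
        (ip v (X.mulVec v)).re ≤ c := by
      intro v hv hs
      have h0 := h v hv hs
      rw [hrw v hv] at h0
      linarith
    have hc0 : 0 ≤ c := by
      have h1 := hre v0 hv0 hs0
      have h2 : 0 ≤ (ip v0 (X.mulVec v0)).re := by
        rw [hdiag]
        simp only [Complex.ofReal_re]
        positivity
      linarith
    apply Real.sSup_le _ hc0
    rintro r ⟨v, w, hv, hw, hsv, hsw, rfl⟩
    have bound : ∀ u : Fin m × Fin n → ℂ, nrm u = 1 → SRle k u →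
        nrm (B.mulVec u) ≤ Real.sqrt c := by
      intro u hu hsu
      have h1 : (nrm (B.mulVec u)) ^ 2 ≤ c := by
        have := hre u hu hsu
        rw [hdiag, Complex.ofReal_re] at this
        exact this
      calc nrm (B.mulVec u) = Real.sqrt ((nrm (B.mulVec u)) ^ 2) :=
            (Real.sqrt_sq (nrm_nonneg _)).symm
        _ ≤ Real.sqrt c := Real.sqrt_le_sqrt h1
    calc ‖ip w (X.mulVec v)‖
        = ‖ip (B.mulVec w) (B.mulVec v)‖ := by rw [hipX]
      _ ≤ nrm (B.mulVec w) * nrm (B.mulVec v) := abs_ip_le _ _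
      _ ≤ Real.sqrt c * Real.sqrt c :=
          mul_le_mul (bound w hw hsw) (bound v hv hsv) (nrm_nonneg _) (Real.sqrt_nonneg _)
      _ = c := Real.mul_self_sqrt hc0
  · intro h v hv hs
    have hbdd : BddAbove { r : ℝ | ∃ v w : Fin m × Fin n → ℂ, nrm v = 1 ∧ nrm w = 1 ∧
        SRle k v ∧ SRle k w ∧ r = ‖ip w (X.mulVec v)‖ } := by
      refine ⟨∑ p, ∑ q, ‖X p q‖, ?_⟩
      rintro r ⟨v, w, hv, hw, _, _, rfl⟩
      have hmv : ∀ p, (X.mulVec v) p = ∑ q, X p q * v q := fun p => rfl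
      calc ‖ip w (X.mulVec v)‖
          ≤ ∑ p, ‖(starRingEnd ℂ) (w p) * (X.mulVec v) p‖ :=
            norm_sum_le _ _
        _ ≤ ∑ p, ∑ q, ‖X p q‖ := by
            refine Finset.sum_le_sum fun p _ => ?_
            rw [norm_mul, Complex.norm_conj]
            calc ‖w p‖ * ‖(X.mulVec v) p‖
                ≤ 1 * ‖(X.mulVec v) p‖ :=
                  mul_le_mul_of_nonneg_right (abs_apply_le_one_of_nrm_one hw p)
                    (norm_nonneg _)
              _ = ‖(X.mulVec v) p‖ := one_mul _
              _ ≤ ∑ q, ‖X p q * v q‖ := by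
                  rw [hmv]; exact norm_sum_le _ _
              _ ≤ ∑ q, ‖X p q‖ := by
                  refine Finset.sum_le_sum fun q _ => ?_
                  rw [norm_mul]
                  calc ‖X p q‖ * ‖v q‖
                      ≤ ‖X p q‖ * 1 :=
                        mul_le_mul_of_nonneg_left (abs_apply_le_one_of_nrm_one hv q)
                          (norm_nonneg _)
                    _ = ‖X p q‖ := mul_one _
    have hmem : ‖ip v (X.mulVec v)‖ ∈ { r : ℝ | ∃ v w : Fin m × Fin n → ℂ,
        nrm v = 1 ∧ nrm w = 1 ∧ SRle k v ∧ SRle k w ∧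
        r = ‖ip w (X.mulVec v)‖ } := ⟨v, v, hv, hv, hs, hs, rfl⟩
    have h1 : ‖ip v (X.mulVec v)‖ ≤ c :=
      le_trans (le_csSup hbdd hmem) h
    have h2 : (ip v (X.mulVec v)).re ≤ ‖ip v (X.mulVec v)‖ :=
      Complex.re_le_norm _
    rw [hrw v hv]
    linarith
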